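/- For all sequences i₁,…,i_k and j₁,…,j_{k′} in [−n,n]* such that x_{i₁}⋯x_{i_k} = x_{j₁}⋯x_{j_{k′}} as monomials, one has Ψ_{i₁,…,i_k} − Ψ_{j₁,…,j_{k′}} ∈ K₁. -/

import Mathlib

open scoped BigOperators

noncomputable section

namespace ToricBorderBasis

abbrev Exp (n : ℕ) := Fin n → ℤ

abbrev LaurentS (n : ℕ) (k : Type*) [Field k] : Type _ := AddMonoidAlgebra k (Exp n)

variable {k : Type*} [Field k] {n : ℕ}

def edeg {n : ℕ} (α : Exp n) : ℕ := ∑ i, (α i).natAbs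

def mono (k : Type*) [Field k] {n : ℕ} (α : Exp n) : LaurentS n k :=
  AddMonoidAlgebra.ofCoeff (Finsupp.single α 1)

def pdeg (p : LaurentS n k) : ℕ := (p.coeff : Exp n →₀ k).support.sup edeg

def expOf (n : ℕ) (i : Fin n) (s : Bool) : Exp n :=
  Pi.single i (if s then 1 else -1)

def varX (k : Type*) [Field k] {n : ℕ} (i : Fin n) (s : Bool) : LaurentS n k :=
  mono k (expOf n i s)

def Bx {n : ℕ} (B : Set (Exp n)) : Set (Exp n) :=
  B ∪ {β | ∃ i s, ∃ α ∈ B, β = expOf n i s + α}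

def bord {n : ℕ} (B : Set (Exp n)) : Set (Exp n) := Bx B \ B

def ConnectedToOne {n : ℕ} (B : Set (Exp n)) : Prop :=
  (0 : Exp n) ∈ B ∧ ∀ α ∈ B, α ≠ 0 →
    ∃ i s, ∃ α' ∈ B, α = expOf n i s + α' ∧ edeg α' < edeg α

def spanMon (k : Type*) [Field k] {n : ℕ} (A : Set (Exp n)) :
    Submodule k (LaurentS n k) :=
  Submodule.span k {p | ∃ α ∈ A, p = mono k α}

def Xop (π : LaurentS n k →ₗ[k] LaurentS n k) (i : Fin n) (s : Bool) :
    LaurentS n k →ₗ[k] LaurentS n k :=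
  π ∘ₗ LinearMap.mulLeft k (varX k i s)

/-- `π` is a projection from `⟨B^×⟩` onto `⟨B⟩`. -/
def IsProj (π : LaurentS n k →ₗ[k] LaurentS n k) (B : Set (Exp n)) : Prop :=
  (∀ p ∈ spanMon k (Bx B), π p ∈ spanMon k B) ∧ (∀ p ∈ spanMon k B, π p = p)

/-- The operators `X_i`, `i ∈ [−n,n]*`, pairwise commute on `⟨B⟩`. -/
def CommRelAll (π : LaurentS n k →ₗ[k] LaurentS n k) (B : Set (Exp n)) : Prop :=
  ∀ (i : Fin n) (s : Bool) (j : Fin n) (t : Bool), ∀ b ∈ spanMon k B,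
    Xop π i s (Xop π j t b) = Xop π j t (Xop π i s b)

/-- `X_i ∘ X_{−i} = Id` on `⟨B⟩` for every `i ∈ [−n,n]*`. -/
def InvRelAll (π : LaurentS n k →ₗ[k] LaurentS n k) (B : Set (Exp n)) : Prop :=
  ∀ (i : Fin n) (s : Bool), ∀ b ∈ spanMon k B, Xop π i s (Xop π i (!s) b) = b

/-- The rewriting family `F = {x^β − π(x^β) : x^β ∈ ∂B}`. -/
def rewFamAll (π : LaurentS n k →ₗ[k] LaurentS n k) (B : Set (Exp n)) :
    Set (LaurentS n k) :=
  {f | ∃ β ∈ bord B, f = mono k β - π (mono k β)}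

/-- Indices of the basis `Y_i[m]` of the free module `S₁`:
pairs of a signed index `(i,s)` and `m ∈ B` with `x_i m ∉ B`. -/
def GoodIdx (n : ℕ) (B : Set (Exp n)) : Type :=
  {q : (Fin n × Bool) × Exp n // q.2 ∈ B ∧ expOf n q.1.1 q.1.2 + q.2 ∉ B}

/-- The free `S`-module `S₁` with basis the `Y_i[m]`, `m ∈ B`, `x_i m ∉ B`. -/
abbrev S1 (n : ℕ) (k : Type*) [Field k] (B : Set (Exp n)) : Type _ :=
  GoodIdx n B →₀ LaurentS n k

open Classical in
/-- The basis element `Y_i[m]`, with the convention `Y_i[m] = 0` if `x_i m ∈ B`. -/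
def Ysym (k : Type*) [Field k] {n : ℕ} (B : Set (Exp n)) (i : Fin n) (s : Bool)
    (m : Exp n) : S1 n k B :=
  if h : m ∈ B ∧ expOf n i s + m ∉ B then Finsupp.single ⟨((i, s), m), h⟩ 1 else 0

/-- `k`-linear extension `b ↦ Y_i[b]` for `b ∈ ⟨B⟩`. -/
def YsymL (k : Type*) [Field k] {n : ℕ} (B : Set (Exp n)) (i : Fin n) (s : Bool)
    (b : LaurentS n k) : S1 n k B :=
  (b.coeff : Exp n →₀ k).sum fun m c => c • Ysym k B i s m

/-- `ψ_i(m) = x_i m − π(x_i m)` for a monomial `m`. -/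
def psiMono (π : LaurentS n k →ₗ[k] LaurentS n k) (i : Fin n) (s : Bool)
    (m : Exp n) : LaurentS n k :=
  mono k (expOf n i s + m) - π (mono k (expOf n i s + m))

/-- The `S`-module map `∂₁ : S₁ → S`, `Y_i[m] ↦ ψ_i(m)`. -/
def partial1 (π : LaurentS n k →ₗ[k] LaurentS n k) (B : Set (Exp n)) :
    S1 n k B →ₗ[LaurentS n k] LaurentS n k :=
  Finsupp.lsum (LaurentS n k) fun q =>
    LinearMap.toSpanSingleton (LaurentS n k) (LaurentS n k)
      (psiMono π q.1.1.1 q.1.1.2 q.1.2)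

/-- `φ_{i,j}(m) = x_i Y_j[m] − x_j Y_i[m] − Y_j[X_i(m)] + Y_i[X_j(m)]`. -/
def phiEl (π : LaurentS n k →ₗ[k] LaurentS n k) (B : Set (Exp n))
    (i : Fin n) (s : Bool) (j : Fin n) (t : Bool) (m : Exp n) : S1 n k B :=
  varX k i s • Ysym k B j t m - varX k j t • Ysym k B i s m
    - YsymL k B j t (Xop π i s (mono k m)) + YsymL k B i s (Xop π j t (mono k m))

/-- `ρ_i(m) = x_i Y_{−i}[m] + Y_i[X_{−i}(m)]`. -/
def rhoEl (π : LaurentS n k →ₗ[k] LaurentS n k) (B : Set (Exp n))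
    (i : Fin n) (s : Bool) (m : Exp n) : S1 n k B :=
  varX k i s • Ysym k B i (!s) m + YsymL k B i s (Xop π i (!s) (mono k m))

/-- The `S`-submodule `K₁ ⊆ S₁` generated by the `ρ_i(m)` and `φ_{i,j}(m)`, `m ∈ B`. -/
def K1 (π : LaurentS n k →ₗ[k] LaurentS n k) (B : Set (Exp n)) :
    Submodule (LaurentS n k) (S1 n k B) :=
  Submodule.span (LaurentS n k)
    ({u | ∃ i s m, m ∈ B ∧ u = rhoEl π B i s m} ∪
     {u | ∃ i s j t m, ((i, s) : Fin n × Bool) ≠ (j, t) ∧ m ∈ B ∧ u = phiEl π B i s j t m})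

/-- `X_{i₁} ∘ ⋯ ∘ X_{i_k}` for a sequence of signed indices. -/
def Xcomp (π : LaurentS n k →ₗ[k] LaurentS n k) :
    List (Fin n × Bool) → LaurentS n k →ₗ[k] LaurentS n k
  | [] => LinearMap.id
  | q :: L => (Xop π q.1 q.2) ∘ₗ Xcomp π L

/-- `Ψ_{i₁,…,i_k} = Σ_{l=1}^{k} x_{i₁}⋯x_{i_{l−1}} Y_{i_l}[X_{i_{l+1}} ∘ ⋯ ∘ X_{i_k}(1)]`. -/
def Psi (π : LaurentS n k →ₗ[k] LaurentS n k) (B : Set (Exp n)) :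
    List (Fin n × Bool) → S1 n k B
  | [] => 0
  | q :: L => YsymL k B q.1 q.2 (Xcomp π L 1) + varX k q.1 q.2 • Psi π B L

/-- Degree on `S₁`: max over the nonzero terms `m₁ Y_i[m₂]` of `δ(m₁)`
(`⊥` for the zero element). -/
def s1deg {B : Set (Exp n)} (u : S1 n k B) : WithBot ℕ :=
  u.support.sup fun q => (pdeg (u q) : WithBot ℕ)

end ToricBorderBasis
namespace ToricBorderBasis
variable {k : Type*} [Field k] {n : ℕ}

lemma mono_mul (α β : Exp n) : mono k α * mono k β = mono k (α + β) := by
  simp [mono, AddMonoidAlgebra.ofCoeff_single, AddMonoidAlgebra.single_mul_single]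

lemma mono_zero : mono k (0 : Exp n) = 1 := rfl

lemma mono_injective : Function.Injective (mono k (n := n)) := fun a b h => by
  simpa [mono, AddMonoidAlgebra.ofCoeff_inj, AddMonoidAlgebra.single_left_inj (one_ne_zero (α := k))] using h

/-- signed sum of a word -/
def eps (L : List (Fin n × Bool)) : Exp n := (L.map fun q => expOf n q.1 q.2).sum

lemma eps_nil : eps ([] : List (Fin n × Bool)) = 0 := rfl

lemma eps_cons (q : Fin n × Bool) (L : List (Fin n × Bool)) :
    eps (q :: L) = expOf n q.1 q.2 + eps L := by simp [eps]

lemma prod_varX (L : List (Fin n × Bool)) :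
    (L.map fun q => varX k q.1 q.2).prod = mono k (eps L) := by
  induction L with
  | nil => simp [eps_nil, mono_zero]
  | cons q L ih => rw [List.map_cons, List.prod_cons, ih, eps_cons, ← mono_mul]; rfl

lemma eps_perm {L L' : List (Fin n × Bool)} (h : L.Perm L') : eps L = eps L' := by
  unfold eps; exact List.Perm.sum_eq (h.map _)

section
variable (B : Set (Exp n)) (π : LaurentS n k →ₗ[k] LaurentS n k)

lemma mono_mem {α : Exp n} (h : α ∈ B) : mono k α ∈ spanMon k B :=
  Submodule.subset_span ⟨α, h, rfl⟩

lemma mul_varX_mem {b : LaurentS n k} (i : Fin n) (s : Bool) (hb : b ∈ spanMon k B) :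
    varX k i s * b ∈ spanMon k (Bx B) := by
  refine Submodule.span_induction (p := fun b _ => varX k i s * b ∈ spanMon k (Bx B)) ?_ ?_ ?_ ?_ hb
  · rintro p ⟨α, hα, rfl⟩
    rw [varX, mono_mul]
    exact Submodule.subset_span ⟨_, Or.inr ⟨i, s, α, hα, rfl⟩, rfl⟩
  · simp
  · intro x y _ _ hx hy; rw [mul_add]; exact Submodule.add_mem _ hx hy
  · intro c x _ hx; rw [Algebra.mul_smul_comm]; exact Submodule.smul_mem _ _ hx

lemma Xop_mem (hπ : IsProj π B) {b : LaurentS n k} (i : Fin n) (s : Bool)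
    (hb : b ∈ spanMon k B) : Xop π i s b ∈ spanMon k B :=
  hπ.1 _ (mul_varX_mem B i s hb)

lemma Xcomp_mem (hπ : IsProj π B) {b : LaurentS n k} (hb : b ∈ spanMon k B) :
    ∀ L : List (Fin n × Bool), Xcomp π L b ∈ spanMon k B
  | [] => hb
  | q :: L => Xop_mem B π hπ q.1 q.2 (Xcomp_mem hπ hb L)

lemma one_mem_spanMon (h0 : (0 : Exp n) ∈ B) : (1 : LaurentS n k) ∈ spanMon k B :=
  by rw [← mono_zero]; exact mono_mem B h0

lemma YsymL_mono (i : Fin n) (s : Bool) (m : Exp n) :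
    YsymL k B i s (mono k m) = Ysym k B i s m := by
  rw [YsymL, mono, AddMonoidAlgebra.coeff_ofCoeff, Finsupp.sum_single_index (by simp)]; simp

lemma YsymL_add (i : Fin n) (s : Bool) (b b' : LaurentS n k) :
    YsymL k B i s (b + b') = YsymL k B i s b + YsymL k B i s b' := by
  unfold YsymL
  rw [AddMonoidAlgebra.coeff_add]
  exact Finsupp.sum_add_index' (by simp) (fun m c c' => add_smul c c' _)

lemma YsymL_ksmul (i : Fin n) (s : Bool) (c : k) (b : LaurentS n k) :
    YsymL k B i s (c • b) = c • YsymL k B i s b := by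
  unfold YsymL
  rw [AddMonoidAlgebra.coeff_smul, Finsupp.sum_smul_index' (by simp), Finsupp.smul_sum]
  simp [mul_smul]

lemma YsymL_zero (i : Fin n) (s : Bool) : YsymL k B i s 0 = 0 := by
  unfold YsymL; simp

lemma rho_ext (i : Fin n) (s : Bool) {b : LaurentS n k} (hb : b ∈ spanMon k B) :
    varX k i s • YsymL k B i (!s) b + YsymL k B i s (Xop π i (!s) b) ∈ K1 π B := by
  refine Submodule.span_induction
    (p := fun b _ => varX k i s • YsymL k B i (!s) b
      + YsymL k B i s (Xop π i (!s) b) ∈ K1 π B) ?_ ?_ ?_ ?_ hb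
  · rintro p ⟨α, hα, rfl⟩
    refine Submodule.subset_span (Or.inl ⟨i, s, α, hα, ?_⟩)
    rw [rhoEl, YsymL_mono]
  · simp [YsymL_zero]
  · intro x y _ _ hx hy
    have h : varX k i s • YsymL k B i (!s) (x + y) + YsymL k B i s (Xop π i (!s) (x + y))
        = (varX k i s • YsymL k B i (!s) x + YsymL k B i s (Xop π i (!s) x))
        + (varX k i s • YsymL k B i (!s) y + YsymL k B i s (Xop π i (!s) y)) := by
      rw [YsymL_add, map_add, YsymL_add, smul_add]; abel
    rw [h]; exact Submodule.add_mem _ hx hy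
  · intro c x _ hx
    have h : varX k i s • YsymL k B i (!s) (c • x) + YsymL k B i s (Xop π i (!s) (c • x))
        = c • (varX k i s • YsymL k B i (!s) x + YsymL k B i s (Xop π i (!s) x)) := by
      rw [YsymL_ksmul, map_smul, YsymL_ksmul, smul_add, smul_comm]
    rw [h]; exact Submodule.smul_of_tower_mem _ c hx

lemma phi_ext (i : Fin n) (s : Bool) (j : Fin n) (t : Bool)
    (hne : ((i, s) : Fin n × Bool) ≠ (j, t)) {b : LaurentS n k} (hb : b ∈ spanMon k B) :
    varX k i s • YsymL k B j t b - varX k j t • YsymL k B i s b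
      - YsymL k B j t (Xop π i s b) + YsymL k B i s (Xop π j t b) ∈ K1 π B := by
  refine Submodule.span_induction
    (p := fun b _ => varX k i s • YsymL k B j t b - varX k j t • YsymL k B i s b
      - YsymL k B j t (Xop π i s b) + YsymL k B i s (Xop π j t b) ∈ K1 π B) ?_ ?_ ?_ ?_ hb
  · rintro p ⟨α, hα, rfl⟩
    refine Submodule.subset_span (Or.inr ⟨i, s, j, t, α, hne, hα, ?_⟩)
    rw [phiEl, YsymL_mono, YsymL_mono]
  · simp [YsymL_zero]
  · intro x y _ _ hx hy
    have h : varX k i s • YsymL k B j t (x + y) - varX k j t • YsymL k B i s (x + y)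
        - YsymL k B j t (Xop π i s (x + y)) + YsymL k B i s (Xop π j t (x + y))
        = (varX k i s • YsymL k B j t x - varX k j t • YsymL k B i s x
          - YsymL k B j t (Xop π i s x) + YsymL k B i s (Xop π j t x))
        + (varX k i s • YsymL k B j t y - varX k j t • YsymL k B i s y
          - YsymL k B j t (Xop π i s y) + YsymL k B i s (Xop π j t y)) := by
      rw [YsymL_add, YsymL_add, map_add, map_add, YsymL_add, YsymL_add,
        smul_add, smul_add]
      abel
    rw [h]; exact Submodule.add_mem _ hx hy
  · intro c x _ hx
    have h : varX k i s • YsymL k B j t (c • x) - varX k j t • YsymL k B i s (c • x)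
        - YsymL k B j t (Xop π i s (c • x)) + YsymL k B i s (Xop π j t (c • x))
        = c • (varX k i s • YsymL k B j t x - varX k j t • YsymL k B i s x
          - YsymL k B j t (Xop π i s x) + YsymL k B i s (Xop π j t x)) := by
      rw [YsymL_ksmul, YsymL_ksmul, map_smul, map_smul, YsymL_ksmul, YsymL_ksmul,
        smul_comm (varX k i s), smul_comm (varX k j t)]
      module
    rw [h]; exact Submodule.smul_of_tower_mem _ c hx

lemma Xcomp_cons (q : Fin n × Bool) (L : List (Fin n × Bool)) (b : LaurentS n k) :
    Xcomp π (q :: L) b = Xop π q.1 q.2 (Xcomp π L b) := rfl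

lemma Psi_cons (q : Fin n × Bool) (L : List (Fin n × Bool)) :
    Psi π B (q :: L) = YsymL k B q.1 q.2 (Xcomp π L 1) + varX k q.1 q.2 • Psi π B L := rfl

lemma expOf_cancel (i : Fin n) (s : Bool) : expOf n i s + expOf n i (!s) = 0 := by
  cases s <;> (ext j; simp [expOf, Pi.single_apply]; split <;> ring)

lemma eps_apply (L : List (Fin n × Bool)) (i : Fin n) :
    eps L i = (L.count (i, true) : ℤ) - (L.count (i, false) : ℤ) := by
  induction L with
  | nil => simp [eps_nil]
  | cons q L ih =>
    rcases q with ⟨j, t⟩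
    have h : eps ((j, t) :: L) i = expOf n j t i + eps L i := by
      rw [eps_cons]; rfl
    rw [h, ih]
    rcases eq_or_ne j i with rfl | hji
    · cases t <;> simp [expOf, List.count_cons, Pi.single_apply] <;> push_cast <;> ring
    · cases t <;>
        simp [expOf, List.count_cons, Pi.single_apply, hji, Prod.ext_iff]

lemma find_pair {L' M : List (Fin n × Bool)} {i : Fin n} {s : Bool}
    (hq : ((i, s) : Fin n × Bool) ∉ L') (heps : eps ((i, s) :: M) = eps L') :
    ((i, !s) : Fin n × Bool) ∈ M := by
  have h1 := congrFun heps i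
  rw [eps_apply, eps_apply] at h1
  have h0 : L'.count (i, s) = 0 := List.count_eq_zero.mpr hq
  have hpos : 0 < M.count (i, !s) := by
    cases s <;> simp only [List.count_cons, Bool.not_true, Bool.not_false] at h1 h0 ⊢ <;>
      simp at h1 <;> omega
  exact List.count_pos_iff.mp hpos

section
variable (hπ : IsProj π B) (hcomm : CommRelAll π B) (hinv : InvRelAll π B)
include hπ

lemma Xcomp_perm (hcomm : CommRelAll π B) {L L' : List (Fin n × Bool)} (h : L.Perm L')
    {b : LaurentS n k} (hb : b ∈ spanMon k B) : Xcomp π L b = Xcomp π L' b := by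
  induction h with
  | nil => rfl
  | cons q h ih => rw [Xcomp_cons, Xcomp_cons, ih]
  | swap a c l =>
    rw [Xcomp_cons, Xcomp_cons, Xcomp_cons, Xcomp_cons]
    exact hcomm c.1 c.2 a.1 a.2 _ (Xcomp_mem B π hπ hb l)
  | trans h1 h2 ih1 ih2 => rw [ih1, ih2]

lemma Xcomp_cancel (hinv : InvRelAll π B) (i : Fin n) (s : Bool)
    (M : List (Fin n × Bool)) {b : LaurentS n k} (hb : b ∈ spanMon k B) :
    Xcomp π ((i, s) :: (i, !s) :: M) b = Xcomp π M b := by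
  rw [Xcomp_cons, Xcomp_cons]
  exact hinv i s _ (Xcomp_mem B π hπ hb M)

lemma Xcomp_eq (hcomm : CommRelAll π B) (hinv : InvRelAll π B)
    {b : LaurentS n k} (hb : b ∈ spanMon k B) :
    ∀ N : ℕ, ∀ L L' : List (Fin n × Bool), L.length + L'.length ≤ N →
      eps L = eps L' → Xcomp π L b = Xcomp π L' b := by
  intro N
  induction N with
  | zero =>
    intro L L' hlen heps
    have hL : L = [] := List.length_eq_zero_iff.mp (by omega)
    have hL' : L' = [] := List.length_eq_zero_iff.mp (by omega)
    rw [hL, hL']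
  | succ N IH =>
    intro L L' hlen heps
    cases L with
    | nil =>
      cases L' with
      | nil => rfl
      | cons q M' =>
        obtain ⟨i, s⟩ := q
        have hmem : ((i, !s) : Fin n × Bool) ∈ M' :=
          find_pair (by simp) heps.symm
        have hperm := (List.perm_cons_erase hmem).cons (i, s)
        rw [Xcomp_perm B π hπ hcomm hperm hb,
          Xcomp_cancel B π hπ hinv i s _ hb]
        refine IH [] _ ?_ ?_
        · have hl := hperm.length_eq
          simp at hl hlen ⊢; omega
        · have h2 := eps_perm hperm
          rw [← heps] at h2
          rw [eps_cons, eps_cons, ← add_assoc, expOf_cancel, zero_add] at h2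
          first | exact h2 | exact h2.symm
    | cons q M =>
      by_cases hmem : q ∈ L'
      · have hperm := List.perm_cons_erase hmem
        rw [Xcomp_perm B π hπ hcomm hperm hb, Xcomp_cons, Xcomp_cons]
        congr 1
        refine IH M _ ?_ ?_
        · have hl := hperm.length_eq
          simp at hl hlen ⊢; omega
        · have h2 := eps_perm hperm
          rw [← heps] at h2
          rw [eps_cons, eps_cons] at h2
          first | exact add_left_cancel h2 | exact (add_left_cancel h2).symm
      · rcases q with ⟨i, s⟩
        have hmem2 : ((i, !s) : Fin n × Bool) ∈ M := find_pair hmem heps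
        have hperm := (List.perm_cons_erase hmem2).cons (i, s)
        rw [Xcomp_perm B π hπ hcomm hperm hb,
          Xcomp_cancel B π hπ hinv i s _ hb]
        refine IH _ L' ?_ ?_
        · have hl := hperm.length_eq
          simp at hl hlen ⊢; omega
        · have h2 := eps_perm hperm
          rw [heps] at h2
          rw [eps_cons, eps_cons, ← add_assoc, expOf_cancel, zero_add] at h2
          first | exact h2 | exact h2.symm

lemma Psi_swap (a c : Fin n × Bool) (L : List (Fin n × Bool))
    (h1 : (1 : LaurentS n k) ∈ spanMon k B) :
    Psi π B (a :: c :: L) - Psi π B (c :: a :: L) ∈ K1 π B := by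
  by_cases hac : a = c
  · rw [hac, sub_self]; exact Submodule.zero_mem _
  · set m := Xcomp π L 1 with hm
    have hmm : m ∈ spanMon k B := Xcomp_mem B π hπ h1 L
    have key : Psi π B (a :: c :: L) - Psi π B (c :: a :: L)
        = varX k a.1 a.2 • YsymL k B c.1 c.2 m - varX k c.1 c.2 • YsymL k B a.1 a.2 m
          - YsymL k B c.1 c.2 (Xop π a.1 a.2 m) + YsymL k B a.1 a.2 (Xop π c.1 c.2 m) := by
      simp only [Psi_cons, Xcomp_cons, ← hm]
      rw [smul_add, smul_add, smul_smul, smul_smul, mul_comm (varX k a.1 a.2)]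
      abel
    rw [key]
    refine phi_ext B π a.1 a.2 c.1 c.2 ?_ hmm
    simpa using hac
  
lemma Psi_cancel (i : Fin n) (s : Bool) (L : List (Fin n × Bool))
    (h1 : (1 : LaurentS n k) ∈ spanMon k B) :
    Psi π B ((i, s) :: (i, !s) :: L) - Psi π B L ∈ K1 π B := by
  set m := Xcomp π L 1 with hm
  have hmm : m ∈ spanMon k B := Xcomp_mem B π hπ h1 L
  have hone : varX k i s * varX k i (!s) = 1 := by
    rw [varX, varX, mono_mul, expOf_cancel, mono_zero]
  have key : Psi π B ((i, s) :: (i, !s) :: L) - Psi π B L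
      = varX k i s • YsymL k B i (!s) m + YsymL k B i s (Xop π i (!s) m) := by
    simp only [Psi_cons, Xcomp_cons, ← hm]
    rw [smul_add, smul_smul, hone, one_smul]
    abel
  rw [key]
  exact rho_ext B π i s hmm

lemma Psi_perm (hcomm : CommRelAll π B) (h1 : (1 : LaurentS n k) ∈ spanMon k B)
    {L L' : List (Fin n × Bool)} (h : L.Perm L') :
    Psi π B L - Psi π B L' ∈ K1 π B := by
  induction h with
  | nil => rw [sub_self]; exact Submodule.zero_mem _
  | @cons q l1 l2 h ih =>
    rw [Psi_cons, Psi_cons, Xcomp_perm B π hπ hcomm h h1]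
    have e : YsymL k B q.1 q.2 (Xcomp π l2 1) + varX k q.1 q.2 • Psi π B l1
        - (YsymL k B q.1 q.2 (Xcomp π l2 1) + varX k q.1 q.2 • Psi π B l2)
        = varX k q.1 q.2 • (Psi π B l1 - Psi π B l2) := by
      rw [smul_sub]; abel
    rw [e]
    exact Submodule.smul_mem _ _ ih
  | swap a c l => exact Psi_swap B π hπ c a l h1
  | @trans l1 l2 l3 hxy hyz ih1 ih2 =>
    have e : Psi π B l1 - Psi π B l3
        = (Psi π B l1 - Psi π B l2) + (Psi π B l2 - Psi π B l3) :=
      (sub_add_sub_cancel _ _ _).symm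
    rw [e]
    exact Submodule.add_mem _ ih1 ih2

lemma Psi_eq (hcomm : CommRelAll π B) (hinv : InvRelAll π B)
    (h1 : (1 : LaurentS n k) ∈ spanMon k B) :
    ∀ N : ℕ, ∀ L L' : List (Fin n × Bool), L.length + L'.length ≤ N →
      eps L = eps L' → Psi π B L - Psi π B L' ∈ K1 π B := by
  intro N
  induction N with
  | zero =>
    intro L L' hlen _
    have hL : L = [] := List.length_eq_zero_iff.mp (by omega)
    have hL' : L' = [] := List.length_eq_zero_iff.mp (by omega)
    rw [hL, hL', sub_self]; exact Submodule.zero_mem _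
  | succ N IH =>
    intro L L' hlen heps
    cases L with
    | nil =>
      cases L' with
      | nil => rw [sub_self]; exact Submodule.zero_mem _
      | cons q M' =>
        obtain ⟨i, s⟩ := q
        have hmem : ((i, !s) : Fin n × Bool) ∈ M' :=
          find_pair (by simp) heps.symm
        obtain ⟨M₂, hperm⟩ : ∃ M₂, ((i, s) :: M').Perm ((i, s) :: (i, !s) :: M₂) :=
          ⟨_, (List.perm_cons_erase hmem).cons (i, s)⟩
        have d1 : Psi π B ((i, s) :: M') - Psi π B ((i, s) :: (i, !s) :: M₂)
            ∈ K1 π B := Psi_perm B π hπ hcomm h1 hperm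
        have d2 := Psi_cancel B π hπ i s M₂ h1
        have heps2 : eps ([] : List (Fin n × Bool)) = eps M₂ := by
          have h2 := eps_perm hperm
          rw [← heps] at h2
          rw [eps_cons, eps_cons, ← add_assoc, expOf_cancel, zero_add] at h2
          first | exact h2 | exact h2.symm
        have d3 : Psi π B [] - Psi π B M₂ ∈ K1 π B := by
          refine IH [] M₂ ?_ heps2
          have hl := hperm.length_eq
          simp at hl hlen ⊢; omega
        have e : Psi π B ([] : List (Fin n × Bool)) - Psi π B ((i, s) :: M')
            = (Psi π B [] - Psi π B M₂)
              - (Psi π B ((i, s) :: (i, !s) :: M₂) - Psi π B M₂)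
              - (Psi π B ((i, s) :: M') - Psi π B ((i, s) :: (i, !s) :: M₂)) := by
          abel
        rw [e]
        exact Submodule.sub_mem _ (Submodule.sub_mem _ d3 d2) d1
    | cons q M =>
      by_cases hmem : q ∈ L'
      · obtain ⟨M'', hperm⟩ : ∃ M'', L'.Perm (q :: M'') := ⟨_, List.perm_cons_erase hmem⟩
        have d1 : Psi π B L' - Psi π B (q :: M'') ∈ K1 π B :=
          Psi_perm B π hπ hcomm h1 hperm
        have heps2 : eps M = eps M'' := by
          have h2 := eps_perm hperm
          rw [← heps] at h2
          rw [eps_cons, eps_cons] at h2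
          first | exact add_left_cancel h2 | exact (add_left_cancel h2).symm
        have hXc : Xcomp π M (1 : LaurentS n k) = Xcomp π M'' 1 :=
          Xcomp_eq B π hπ hcomm hinv h1 (M.length + M''.length) M M'' le_rfl heps2
        have d2 : Psi π B M - Psi π B M'' ∈ K1 π B := by
          refine IH M M'' ?_ heps2
          have hl := hperm.length_eq
          simp at hl hlen ⊢; omega
        have e : Psi π B (q :: M) - Psi π B L'
            = varX k q.1 q.2 • (Psi π B M - Psi π B M'')
              - (Psi π B L' - Psi π B (q :: M'')) := by
          rw [Psi_cons, Psi_cons, hXc, smul_sub]; abel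
        rw [e]
        exact Submodule.sub_mem _ (Submodule.smul_mem _ _ d2) d1
      · obtain ⟨i, s⟩ := q
        have hmem2 : ((i, !s) : Fin n × Bool) ∈ M := find_pair hmem heps
        obtain ⟨M₂, hperm⟩ : ∃ M₂, ((i, s) :: M).Perm ((i, s) :: (i, !s) :: M₂) :=
          ⟨_, (List.perm_cons_erase hmem2).cons (i, s)⟩
        have d1 : Psi π B ((i, s) :: M) - Psi π B ((i, s) :: (i, !s) :: M₂)
            ∈ K1 π B := Psi_perm B π hπ hcomm h1 hperm
        have d2 := Psi_cancel B π hπ i s M₂ h1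
        have heps2 : eps M₂ = eps L' := by
          have h2 := eps_perm hperm
          rw [heps] at h2
          rw [eps_cons, eps_cons, ← add_assoc, expOf_cancel, zero_add] at h2
          first | exact h2 | exact h2.symm
        have d3 : Psi π B M₂ - Psi π B L' ∈ K1 π B := by
          refine IH M₂ L' ?_ heps2
          have hl := hperm.length_eq
          simp at hl hlen ⊢; omega
        have e : Psi π B ((i, s) :: M) - Psi π B L'
            = (Psi π B ((i, s) :: M) - Psi π B ((i, s) :: (i, !s) :: M₂))
              + (Psi π B ((i, s) :: (i, !s) :: M₂) - Psi π B M₂)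
              + (Psi π B M₂ - Psi π B L') := by
          abel
        rw [e]
        exact Submodule.add_mem _ (Submodule.add_mem _ d1 d2) d3

end

end

end ToricBorderBasis

namespace ToricBorderBasis

/-- For all sequences `i₁,…,i_k` and `j₁,…,j_{k′}` in `[−n,n]*`
with `x_{i₁}⋯x_{i_k} = x_{j₁}⋯x_{j_{k′}}` as monomials, one has
`Ψ_{i₁,…,i_k} − Ψ_{j₁,…,j_{k′}} ∈ K₁`. -/
theorem statement_14 {n : ℕ} {k : Type*} [Field k]
    (B : Set (Exp n)) (hBfin : B.Finite) (hB1 : ConnectedToOne B)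
    (π : LaurentS n k →ₗ[k] LaurentS n k) (hπ : IsProj π B)
    (hcomm : CommRelAll π B) (hinv : InvRelAll π B) :
    ∀ L L' : List (Fin n × Bool),
      (L.map fun q => varX k q.1 q.2).prod = (L'.map fun q => varX k q.1 q.2).prod →
      Psi π B L - Psi π B L' ∈ K1 π B := by
  intro L L' hprod
  rw [prod_varX, prod_varX] at hprod
  have heps : eps L = eps L' := mono_injective hprod
  exact Psi_eq B π hπ hcomm hinv (one_mem_spanMon B hB1.1)
    (L.length + L'.length) L L' le_rfl heps

end ToricBorderBasis
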